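/- For every integers m ≥ 2 and k ≥ 2, the choice number of the complete k-partite graph with all parts of size m satisfies ch(K_{m*k}) ≤ k·(ln m + ln ln m + 20). -/

import Mathlib

/-- A graph `G` is `s`-choosable if for every assignment of a list (finite set) of `s` colors to
each vertex there is a proper coloring choosing each vertex's color from its list. -/
def Choosable {V : Type*} (G : SimpleGraph V) (s : ℕ) : Prop :=
  ∀ L : V → Finset ℕ, (∀ v, (L v).card = s) →
    ∃ f : V → ℕ, (∀ v, f v ∈ L v) ∧ ∀ u v, G.Adj u v → f u ≠ f v

/-- The choice number of `G`: the smallest `s` such that `G` is `s`-choosable. -/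
noncomputable def choiceNumber {V : Type*} (G : SimpleGraph V) : ℕ :=
  sInf {s | Choosable G s}

/-- `K_{m*k}`: the complete `k`-partite graph with all `k` parts of size `m`. -/
abbrev Kmk (m k : ℕ) : SimpleGraph ((_ : Fin k) × Fin m) :=
  SimpleGraph.completeMultipartiteGraph fun _ : Fin k => Fin m

namespace KmkUpper

open Finset

set_option maxHeartbeats 1600000

abbrev Vtx (m k : ℕ) := (_ : Fin k) × Fin m

variable {m k : ℕ}

def gset (L : Vtx m k → Finset ℕ) (gh : ℕ → Fin k) (v : Vtx m k) : Finset ℕ :=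
  (L v).filter fun c => gh c = v.1

noncomputable def west (q : ℝ) (d : ℕ) : ℝ := (Nat.factorial d : ℝ) * q ^ (d - 1)

lemma west_nonneg {q : ℝ} (hq : 0 ≤ q) (d : ℕ) : 0 ≤ west q d := by unfold west; positivity

lemma west_zero (q : ℝ) : west q 0 = 1 := by simp [west]

lemma west_one (q : ℝ) : west q 1 = 1 := by simp [west]

noncomputable def Wpot (L : Vtx m k → Finset ℕ) (gh : ℕ → Fin k) (q : ℝ) (R : Finset ℕ) : ℝ :=
  ∑ v : Vtx m k, west q ((gset L gh v \ R).card)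

lemma Wpot_nonneg (L : Vtx m k → Finset ℕ) (gh : ℕ → Fin k) {q : ℝ} (hq : 0 ≤ q)
    (R : Finset ℕ) : 0 ≤ Wpot L gh q R := Finset.sum_nonneg fun v _ => west_nonneg hq _

def blocked (L : Vtx m k → Finset ℕ) (gh : ℕ → Fin k) (R : Finset ℕ) : Finset ℕ :=
  (univ.filter fun u : Vtx m k => ((gset L gh u) \ R).card = 1).biUnion
    fun u => gset L gh u \ R

lemma card_blocked_le (L : Vtx m k → Finset ℕ) (gh : ℕ → Fin k) {q : ℝ} (hq : 0 ≤ q)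
    (R : Finset ℕ) : ((blocked L gh R).card : ℝ) ≤ Wpot L gh q R := by
  have h1 : (blocked L gh R).card ≤
      (univ.filter fun u : Vtx m k => ((gset L gh u) \ R).card = 1).card := by
    refine le_trans Finset.card_biUnion_le ?_
    rw [Finset.card_eq_sum_ones (univ.filter fun u : Vtx m k => ((gset L gh u) \ R).card = 1)]
    refine Finset.sum_le_sum fun u hu => ?_
    simp only [Finset.mem_filter] at hu
    omega
  calc ((blocked L gh R).card : ℝ)
      ≤ ((univ.filter fun u : Vtx m k => ((gset L gh u) \ R).card = 1).card : ℝ) := by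
        exact_mod_cast h1
    _ = ∑ u ∈ univ.filter fun u : Vtx m k => ((gset L gh u) \ R).card = 1,
          west q ((gset L gh u \ R).card) := by
        rw [Finset.card_eq_sum_ones, Nat.cast_sum]
        refine Finset.sum_congr rfl fun u hu => ?_
        simp only [Finset.mem_filter] at hu
        rw [hu.2, west_one]; norm_num
    _ ≤ Wpot L gh q R := by
        refine Finset.sum_le_sum_of_subset_of_nonneg (Finset.filter_subset _ _)
          fun u _ _ => west_nonneg hq _

section Fixedg
variable (L : Vtx m k → Finset ℕ) (gh : ℕ → Fin k)

lemma sum_incr_le {q : ℝ} (hq : 0 < q) (R : Finset ℕ) (A : Finset ℕ)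
    (hAB : ∀ c ∈ A, c ∉ blocked L gh R) :
    ∑ c ∈ A, (Wpot L gh q (insert c R) - Wpot L gh q R) ≤ Wpot L gh q R / q := by
  have key : ∀ v : Vtx m k,
      ∑ c ∈ A, (west q ((gset L gh v \ insert c R).card) - west q ((gset L gh v \ R).card))
        ≤ west q ((gset L gh v \ R).card) / q := by
    intro v
    set D := gset L gh v \ R with hD
    set d := D.card with hd
    have hsub : ∀ c, gset L gh v \ insert c R = D.erase c := by
      intro c; rw [hD, Finset.sdiff_insert]
    -- pointwise bound
    have hpt : ∀ c ∈ A, west q ((gset L gh v \ insert c R).card) - west q d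
        ≤ if c ∈ D then west q (d - 1) else 0 := by
      intro c hc
      rw [hsub c]
      by_cases hcD : c ∈ D
      · rw [if_pos hcD, Finset.card_erase_of_mem hcD]
        have := west_nonneg hq.le (d := d)
        linarith
      · rw [if_neg hcD, Finset.erase_eq_of_notMem hcD]
        simp [hd]
    calc ∑ c ∈ A, (west q ((gset L gh v \ insert c R).card) - west q d)
        ≤ ∑ c ∈ A, (if c ∈ D then west q (d - 1) else 0) := Finset.sum_le_sum hpt
      _ = ((A.filter (· ∈ D)).card : ℝ) * west q (d - 1) := by
          rw [Finset.sum_ite, Finset.sum_const_zero, add_zero, Finset.sum_const,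
            nsmul_eq_mul]
      _ ≤ west q d / q := by
          by_cases hne : (A.filter (· ∈ D)).Nonempty
          · obtain ⟨c₀, hc₀⟩ := hne
            simp only [Finset.mem_filter] at hc₀
            have hd1 : d ≠ 1 := by
              intro h1
              obtain ⟨x, hx⟩ := Finset.card_eq_one.mp (hd ▸ h1)
              have : c₀ ∈ blocked L gh R := by
                refine Finset.mem_biUnion.mpr ⟨v, ?_, ?_⟩
                · simp only [Finset.mem_filter, Finset.mem_univ, true_and]
                  rw [← hD]; omega
                · rw [← hD]; exact hc₀.2
              exact hAB c₀ hc₀.1 this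
            have hd0 : d ≠ 0 := by
              intro h0
              rw [Finset.card_eq_zero] at h0
              exact absurd hc₀.2 (by rw [h0]; simp)
            have hd2 : 2 ≤ d := by omega
            have hcard : (A.filter (· ∈ D)).card ≤ d := by
              rw [hd]
              exact Finset.card_le_card (by intro x hx; exact (Finset.mem_filter.mp hx).2)
            have heq : (d : ℝ) * west q (d - 1) = west q d / q := by
              unfold west
              have h1 : d - 1 - 1 = d - 2 := by omega
              have h2 : (d:ℝ) * (Nat.factorial (d-1) : ℝ) = (Nat.factorial d : ℝ) := by
                rw [← Nat.cast_mul]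
                congr 1
                exact Nat.mul_factorial_pred (by omega)
              have h3 : q ^ (d - 1) = q ^ (d - 2) * q := by
                rw [← pow_succ]
                congr 1
                omega
              calc (d : ℝ) * ((Nat.factorial (d-1) : ℝ) * q ^ (d - 1 - 1))
                  = ((d:ℝ) * (Nat.factorial (d-1) : ℝ)) * q ^ (d-2) := by rw [h1]; ring
                _ = (Nat.factorial d : ℝ) * q ^ (d-2) := by rw [h2]
                _ = (Nat.factorial d : ℝ) * q ^ (d-1) / q := by
                    rw [h3]; field_simp
            calc ((A.filter (· ∈ D)).card : ℝ) * west q (d - 1)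
                ≤ (d : ℝ) * west q (d - 1) := by
                  have := west_nonneg hq.le (d := d - 1)
                  exact mul_le_mul_of_nonneg_right (by exact_mod_cast hcard) this
              _ = west q d / q := heq
          · rw [Finset.not_nonempty_iff_eq_empty] at hne
            rw [hne]
            simp only [Finset.card_empty, Nat.cast_zero, zero_mul]
            exact div_nonneg (west_nonneg hq.le _) hq.le
  calc ∑ c ∈ A, (Wpot L gh q (insert c R) - Wpot L gh q R)
      = ∑ c ∈ A, ∑ v : Vtx m k,
          (west q ((gset L gh v \ insert c R).card) - west q ((gset L gh v \ R).card)) := by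
        refine Finset.sum_congr rfl fun c _ => ?_
        rw [Wpot, Wpot, ← Finset.sum_sub_distrib]
    _ = ∑ v : Vtx m k, ∑ c ∈ A,
          (west q ((gset L gh v \ insert c R).card) - west q ((gset L gh v \ R).card)) :=
        Finset.sum_comm
    _ ≤ ∑ v : Vtx m k, west q ((gset L gh v \ R).card) / q := Finset.sum_le_sum fun v _ => key v
    _ = Wpot L gh q R / q := by rw [Wpot, Finset.sum_div]

lemma process (s : ℕ) (hL : ∀ v : Vtx m k, (L v).card = s)
    (q : ℝ) (hq : 0 < q) (Tst Wmax : ℝ) (hWmax : 0 ≤ Wmax)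
    (hTW : Tst + Wmax + (s:ℝ)/2 ≤ s) (hs0 : 0 < s) :
    ∀ (n : ℕ) (F : Finset (Vtx m k)) (R : Finset ℕ), F.card = n →
    (∀ v ∈ F, gset L gh v = ∅) →
    ((R.card : ℝ) + (F.card : ℝ) ≤ Tst) →
    (∀ u : Vtx m k, (gset L gh u).Nonempty → (gset L gh u \ R).Nonempty) →
    (Wpot L gh q R * (1 + 2/(q * s)) ^ F.card ≤ Wmax) →
    ∃ σ : Vtx m k → ℕ, (∀ v ∈ F, σ v ∈ L v ∧ σ v ∉ R) ∧
      Set.InjOn σ ↑F ∧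
      (∀ u : Vtx m k, (gset L gh u).Nonempty → (gset L gh u \ (R ∪ F.image σ)).Nonempty) := by
  intro n
  induction n with
  | zero =>
    intro F R hFn _ _ hne _
    rw [Finset.card_eq_zero] at hFn
    subst hFn
    exact ⟨fun _ => 0, by simp, by simp, fun u hu => by simpa using hne u hu⟩
  | succ n ih =>
    intro F R hFn hFbad hcard hne hW
    have hFne : F.Nonempty := Finset.card_pos.mp (by omega)
    obtain ⟨v, hvF⟩ := hFne
    have hK1 : (1:ℝ) ≤ 1 + 2/(q * s) := by
      have : (0:ℝ) < q * s := by positivity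
      have : (0:ℝ) ≤ 2/(q*s) := by positivity
      linarith
    have hKpos : (0:ℝ) < 1 + 2/(q * s) := by linarith
    have hWR : Wpot L gh q R ≤ Wmax := by
      calc Wpot L gh q R = Wpot L gh q R * 1 := by ring
        _ ≤ Wpot L gh q R * (1 + 2/(q * s)) ^ F.card := by
            refine mul_le_mul_of_nonneg_left ?_ (Wpot_nonneg L gh hq.le R)
            exact one_le_pow₀ hK1
        _ ≤ Wmax := hW
    -- the admissible set
    set A := L v \ (R ∪ blocked L gh R) with hA
    have hAcard : (s:ℝ)/2 ≤ (A.card : ℝ) := by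
      have h1 : (L v).card ≤ A.card + (R ∪ blocked L gh R).card := by
        rw [hA]
        exact Finset.card_le_card_sdiff_add_card
      have h2 : (R ∪ blocked L gh R).card ≤ R.card + (blocked L gh R).card :=
        Finset.card_union_le _ _
      have h3 : ((blocked L gh R).card : ℝ) ≤ Wmax :=
        le_trans (card_blocked_le L gh hq.le R) hWR
      have h4 : ((R.card : ℝ)) ≤ Tst := by
        have : (0:ℝ) ≤ (F.card : ℝ) := by positivity
        linarith
      have h5 : ((L v).card : ℝ) = s := by exact_mod_cast congrArg Nat.cast (hL v)
      have h6 : ((L v).card : ℝ) ≤ (A.card : ℝ) + (R.card : ℝ) + ((blocked L gh R).card : ℝ) := by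
        exact_mod_cast le_trans h1 (by omega)
      linarith
    have hAne : A.Nonempty := by
      rw [← Finset.card_pos]
      by_contra h
      push_neg at h
      have : A.card = 0 := by omega
      rw [this] at hAcard
      have : (0:ℝ) < (s:ℝ) := by exact_mod_cast hs0
      norm_num at hAcard
      linarith
    -- choose a color of A minimizing the new potential
    have hsum := sum_incr_le L gh hq R A (fun c hc => by
      rw [hA] at hc
      have := (Finset.mem_sdiff.mp hc).2
      intro hb; exact this (Finset.mem_union_right _ hb))
    have havg : ∃ c ∈ A, Wpot L gh q (insert c R) - Wpot L gh q R
        ≤ (Wpot L gh q R / q) / (A.card : ℝ) := by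
      by_contra hcon
      push_neg at hcon
      have : ∑ c ∈ A, (Wpot L gh q (insert c R) - Wpot L gh q R)
          > ∑ c ∈ A, (Wpot L gh q R / q) / (A.card : ℝ) := by
        refine Finset.sum_lt_sum_of_nonempty hAne fun c hc => hcon c hc
      rw [Finset.sum_const, nsmul_eq_mul] at this
      have hApos : (0:ℝ) < (A.card : ℝ) := by
        have : (0:ℝ) < (s:ℝ) := by exact_mod_cast hs0
        linarith
      rw [mul_div_cancel₀ _ (ne_of_gt hApos)] at this
      linarith
    obtain ⟨c, hcA, hcmin⟩ := havg
    have hWq : 0 ≤ Wpot L gh q R / q := div_nonneg (Wpot_nonneg L gh hq.le R) hq.le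
    have hspos : (0:ℝ) < (s:ℝ) := by exact_mod_cast hs0
    have hApos : (0:ℝ) < (A.card : ℝ) := by linarith
    have hstep : Wpot L gh q (insert c R) ≤ Wpot L gh q R * (1 + 2/(q * s)) := by
      have h1 : (Wpot L gh q R / q) / (A.card : ℝ) ≤ (Wpot L gh q R / q) / ((s:ℝ)/2) := by
        apply div_le_div_of_nonneg_left hWq (by linarith) hAcard
      have h2 : (Wpot L gh q R / q) / ((s:ℝ)/2) = Wpot L gh q R * (2/(q * s)) := by
        field_simp
      nlinarith [hcmin, h1]
    -- set up IH
    have hcL : c ∈ L v := (Finset.mem_sdiff.mp (hA ▸ hcA)).1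
    have hcR : c ∉ R := fun hr =>
      (Finset.mem_sdiff.mp (hA ▸ hcA)).2 (Finset.mem_union_left _ hr)
    have hcB : c ∉ blocked L gh R := fun hb =>
      (Finset.mem_sdiff.mp (hA ▸ hcA)).2 (Finset.mem_union_right _ hb)
    have hne' : ∀ u : Vtx m k, (gset L gh u).Nonempty → (gset L gh u \ insert c R).Nonempty := by
      intro u hu
      have hDne := hne u hu
      rw [Finset.sdiff_insert]
      by_cases hcD : c ∈ gset L gh u \ R
      · have hd2 : 2 ≤ (gset L gh u \ R).card := by
          rcases Nat.lt_or_ge (gset L gh u \ R).card 2 with hlt | hge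
          · exfalso
            have hd1 : (gset L gh u \ R).card = 1 := by
              have := Finset.card_pos.mpr ⟨c, hcD⟩
              omega
            exact hcB (Finset.mem_biUnion.mpr ⟨u, by
              simp only [Finset.mem_filter, Finset.mem_univ, true_and]; exact hd1, hcD⟩)
          · exact hge
        rw [← Finset.card_pos, Finset.card_erase_of_mem hcD]
        omega
      · rw [Finset.erase_eq_of_notMem hcD]
        exact hDne
    have hcard' : ((insert c R).card : ℝ) + ((F.erase v).card : ℝ) ≤ Tst := by
      rw [Finset.card_insert_of_notMem hcR, Finset.card_erase_of_mem hvF]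
      push_cast [hFn]
      rw [hFn] at hcard
      push_cast at hcard
      linarith
    have hW' : Wpot L gh q (insert c R) * (1 + 2/(q * s)) ^ (F.erase v).card ≤ Wmax := by
      rw [Finset.card_erase_of_mem hvF, hFn, Nat.add_sub_cancel]
      rw [hFn] at hW
      calc Wpot L gh q (insert c R) * (1 + 2/(q * s)) ^ n
          ≤ (Wpot L gh q R * (1 + 2/(q * s))) * (1 + 2/(q * s)) ^ n :=
            mul_le_mul_of_nonneg_right hstep (pow_nonneg (by linarith) n)
        _ = Wpot L gh q R * (1 + 2/(q * s)) ^ (n + 1) := by ring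
        _ ≤ Wmax := hW
    obtain ⟨σ', hσ'1, hσ'2, hσ'3⟩ := ih (F.erase v) (insert c R)
      (by rw [Finset.card_erase_of_mem hvF]; omega)
      (fun w hw => hFbad w (Finset.mem_of_mem_erase hw)) hcard' hne' hW'
    refine ⟨Function.update σ' v c, ?_, ?_, ?_⟩
    · intro w hw
      by_cases hwv : w = v
      · subst hwv
        rw [Function.update_self]
        exact ⟨hcL, hcR⟩
      · rw [Function.update_of_ne hwv]
        have := hσ'1 w (Finset.mem_erase.mpr ⟨hwv, hw⟩)
        exact ⟨this.1, fun hr => this.2 (Finset.mem_insert_of_mem hr)⟩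
    · intro w₁ hw₁ w₂ hw₂ heq
      simp only [Finset.coe_mem, Finset.mem_coe] at hw₁ hw₂
      by_cases h1 : w₁ = v <;> by_cases h2 : w₂ = v
      · rw [h1, h2]
      · exfalso
        rw [h1, Function.update_self, Function.update_of_ne h2] at heq
        exact (hσ'1 w₂ (Finset.mem_erase.mpr ⟨h2, hw₂⟩)).2 (heq ▸ Finset.mem_insert_self c R)
      · exfalso
        rw [h2, Function.update_self, Function.update_of_ne h1] at heq
        exact (hσ'1 w₁ (Finset.mem_erase.mpr ⟨h1, hw₁⟩)).2 (heq ▸ Finset.mem_insert_self c R)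
      · rw [Function.update_of_ne h1, Function.update_of_ne h2] at heq
        exact hσ'2 (Finset.mem_coe.mpr (Finset.mem_erase.mpr ⟨h1, hw₁⟩))
          (Finset.mem_coe.mpr (Finset.mem_erase.mpr ⟨h2, hw₂⟩)) heq
    · intro u hu
      have himg : R ∪ F.image (Function.update σ' v c)
          = insert c R ∪ (F.erase v).image σ' := by
        have h1 : F.image (Function.update σ' v c)
            = insert c ((F.erase v).image σ') := by
          conv_lhs => rw [← Finset.insert_erase hvF]
          rw [Finset.image_insert, Function.update_self]
          congr 1
          refine Finset.image_congr fun w hw => ?_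
          have hw' : w ∈ F.erase v := hw
          exact Function.update_of_ne (Finset.mem_erase.mp hw').1 _ _
        rw [h1, Finset.union_insert, Finset.insert_union]
      rw [himg]
      exact hσ'3 u hu

end Fixedg

def colors (L : Vtx m k → Finset ℕ) : Finset ℕ := univ.biUnion L

lemma list_subset_colors (L : Vtx m k → Finset ℕ) (v : Vtx m k) : L v ⊆ colors L :=
  Finset.subset_biUnion_of_mem L (Finset.mem_univ v)

noncomputable def ghat (L : Vtx m k → Finset ℕ) (hk : 0 < k) (g : ↑(colors L) → Fin k) :
    ℕ → Fin k :=
  fun c => if h : c ∈ colors L then g ⟨c, h⟩ else ⟨0, hk⟩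

open scoped Classical in
/-- The basic counting fact: the number of assignments with prescribed behaviour on `S` (equal
to `p`) and on `T` (different from `p`). -/
lemma count_pattern (L : Vtx m k → Finset ℕ) (hk : 0 < k) (p : Fin k) (S T : Finset ℕ)
    (hS : S ⊆ colors L) (hT : T ⊆ colors L) (hST : Disjoint S T) :
    ∑ g : ↑(colors L) → Fin k,
      (if (∀ c ∈ S, ghat L hk g c = p) ∧ (∀ c ∈ T, ghat L hk g c ≠ p) then (1:ℝ) else 0)
      = ((k:ℝ) - 1) ^ T.card * (k:ℝ) ^ ((colors L).card - S.card - T.card) := by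
  classical
  set w : ↑(colors L) → Fin k → ℝ := fun i x =>
    if (i:ℕ) ∈ S then (if x = p then 1 else 0)
    else if (i:ℕ) ∈ T then (if x = p then 0 else 1) else 1 with hw
  have step1 : ∀ g : ↑(colors L) → Fin k,
      (if (∀ c ∈ S, ghat L hk g c = p) ∧ (∀ c ∈ T, ghat L hk g c ≠ p) then (1:ℝ) else 0)
      = ∏ i : ↑(colors L), w i (g i) := by
    intro g
    have hgh : ∀ i : ↑(colors L), ghat L hk g (i:ℕ) = g i := by
      intro i; rw [ghat, dif_pos i.2]
    by_cases hcond : (∀ c ∈ S, ghat L hk g c = p) ∧ (∀ c ∈ T, ghat L hk g c ≠ p)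
    · rw [if_pos hcond]
      symm
      refine Finset.prod_eq_one fun i _ => ?_
      rw [hw]
      by_cases hiS : (i:ℕ) ∈ S
      · have : g i = p := by rw [← hgh i]; exact hcond.1 _ hiS
        simp [hiS, this]
      · by_cases hiT : (i:ℕ) ∈ T
        · have : g i ≠ p := by rw [← hgh i]; exact hcond.2 _ hiT
          simp [hiS, hiT, this]
        · simp [hiS, hiT]
    · rw [if_neg hcond]
      symm
      push_neg at hcond
      rcases Classical.em (∀ c ∈ S, ghat L hk g c = p) with hS' | hS'
      · obtain ⟨c, hcT, hcp⟩ := hcond hS'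
        refine Finset.prod_eq_zero (Finset.mem_univ (⟨c, hT hcT⟩ : ↑(colors L))) ?_
        have hcS : c ∉ S := fun h => (Finset.disjoint_left.mp hST h) hcT
        have hgc : g ⟨c, hT hcT⟩ = p := by rw [← hgh ⟨c, hT hcT⟩]; exact hcp
        rw [hw]
        simp [hcS, hcT, hgc]
      · push_neg at hS'
        obtain ⟨c, hcS, hcp⟩ := hS'
        refine Finset.prod_eq_zero (Finset.mem_univ (⟨c, hS hcS⟩ : ↑(colors L))) ?_
        have hgc : g ⟨c, hS hcS⟩ ≠ p := by rw [← hgh ⟨c, hS hcS⟩]; exact hcp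
        rw [hw]
        simp [hcS, hgc]
  calc ∑ g : ↑(colors L) → Fin k,
        (if (∀ c ∈ S, ghat L hk g c = p) ∧ (∀ c ∈ T, ghat L hk g c ≠ p) then (1:ℝ) else 0)
      = ∑ g : ↑(colors L) → Fin k, ∏ i : ↑(colors L), w i (g i) :=
        Finset.sum_congr rfl fun g _ => step1 g
    _ = ∑ g ∈ Fintype.piFinset (fun _ : ↑(colors L) => (univ : Finset (Fin k))),
          ∏ i : ↑(colors L), w i (g i) := by rw [Fintype.piFinset_univ]
    _ = ∏ i : ↑(colors L), ∑ x : Fin k, w i x := Finset.sum_prod_piFinset _ _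
    _ = ∏ i : ↑(colors L),
          (if (i:ℕ) ∈ S then (1:ℝ) else if (i:ℕ) ∈ T then ((k:ℝ)-1) else (k:ℝ)) := by
        refine Finset.prod_congr rfl fun i _ => ?_
        rw [hw]
        by_cases hiS : (i:ℕ) ∈ S
        · simp only [hiS, if_true]
          rw [Finset.sum_ite_eq' univ p (fun _ => (1:ℝ))]
          simp
        · by_cases hiT : (i:ℕ) ∈ T
          · simp only [hiS, if_false, hiT, if_true]
            have : ∀ x : Fin k, (if x = p then (0:ℝ) else 1) = 1 - (if x = p then 1 else 0) := by
              intro x; by_cases hx : x = p <;> simp [hx]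
            rw [Finset.sum_congr rfl fun x _ => this x, Finset.sum_sub_distrib]
            rw [Finset.sum_ite_eq' univ p (fun _ => (1:ℝ))]
            simp [Finset.card_univ]
          · simp only [hiS, if_false, hiT, if_false]
            simp [Finset.card_univ, mul_comm]
    _ = ∏ c ∈ colors L,
          (if c ∈ S then (1:ℝ) else if c ∈ T then ((k:ℝ)-1) else (k:ℝ)) :=
        Finset.prod_coe_sort (colors L)
          (fun c => if c ∈ S then (1:ℝ) else if c ∈ T then ((k:ℝ)-1) else (k:ℝ))
    _ = ((k:ℝ) - 1) ^ T.card * (k:ℝ) ^ ((colors L).card - S.card - T.card) := by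
        rw [← Finset.prod_sdiff hS]
        have h1 : ∏ c ∈ S, (if c ∈ S then (1:ℝ) else if c ∈ T then ((k:ℝ)-1) else (k:ℝ)) = 1 :=
          Finset.prod_eq_one fun c hc => by simp [hc]
        have hT' : T ⊆ colors L \ S := by
          intro c hc
          exact Finset.mem_sdiff.mpr ⟨hT hc, fun h => (Finset.disjoint_left.mp hST h) hc⟩
        rw [h1, mul_one, ← Finset.prod_sdiff hT']
        have h2 : ∏ c ∈ T, (if c ∈ S then (1:ℝ) else if c ∈ T then ((k:ℝ)-1) else (k:ℝ))
            = ((k:ℝ)-1) ^ T.card := by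
          rw [Finset.prod_congr rfl (g := fun _ => ((k:ℝ)-1)) fun c hc => by
            have hcS : c ∉ S := fun h => (Finset.disjoint_left.mp hST h) hc
            simp [hcS, hc]]
          rw [Finset.prod_const]
        have h3 : ∏ c ∈ (colors L \ S) \ T,
            (if c ∈ S then (1:ℝ) else if c ∈ T then ((k:ℝ)-1) else (k:ℝ))
            = (k:ℝ) ^ ((colors L).card - S.card - T.card) := by
          rw [Finset.prod_congr rfl (g := fun _ => (k:ℝ)) fun c hc => by
            have h := Finset.mem_sdiff.mp hc
            have h' := Finset.mem_sdiff.mp h.1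
            simp [h'.2, h.2]]
          rw [Finset.prod_const]
          congr 1
          rw [Finset.card_sdiff_of_subset hT', Finset.card_sdiff_of_subset hS]
        rw [h2, h3]
        ring


lemma sum_badcard (L : Vtx m k → Finset ℕ) (hk : 0 < k) (s : ℕ) (hL : ∀ v, (L v).card = s) :
    ∑ g : ↑(colors L) → Fin k,
      ((univ.filter fun v : Vtx m k => gset L (ghat L hk g) v = ∅).card : ℝ)
    = (Fintype.card (Vtx m k) : ℝ) * (((k:ℝ)-1)^s * (k:ℝ)^((colors L).card - s)) := by
  have hcast : ∀ g : ↑(colors L) → Fin k,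
      ((univ.filter fun v : Vtx m k => gset L (ghat L hk g) v = ∅).card : ℝ)
      = ∑ v : Vtx m k, (if gset L (ghat L hk g) v = ∅ then (1:ℝ) else 0) := by
    intro g
    rw [Finset.card_filter, Nat.cast_sum]
    exact Finset.sum_congr rfl fun v _ => by split_ifs <;> simp
  rw [Finset.sum_congr rfl fun g _ => hcast g, Finset.sum_comm]
  have hv : ∀ v : Vtx m k,
      ∑ g : ↑(colors L) → Fin k, (if gset L (ghat L hk g) v = ∅ then (1:ℝ) else 0)
      = ((k:ℝ)-1)^s * (k:ℝ)^((colors L).card - s) := by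
    intro v
    have hiff : ∀ g : ↑(colors L) → Fin k, (gset L (ghat L hk g) v = ∅)
        ↔ ((∀ c ∈ (∅ : Finset ℕ), ghat L hk g c = v.1) ∧
           (∀ c ∈ L v, ghat L hk g c ≠ v.1)) := by
      intro g
      rw [gset, Finset.filter_eq_empty_iff]
      simp
    rw [Finset.sum_congr rfl fun g _ => if_congr (hiff g) rfl rfl]
    rw [count_pattern L hk v.1 ∅ (L v) (Finset.empty_subset _) (list_subset_colors L v)
      (Finset.disjoint_empty_left _)]
    rw [hL v]
    simp
  rw [Finset.sum_congr rfl fun v _ => hv v, Finset.sum_const, Finset.card_univ, nsmul_eq_mul]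

lemma geom_le_two (n : ℕ) (r : ℝ) (hr0 : 0 ≤ r) (hr : r ≤ 1/2) :
    ∑ i ∈ Finset.range n, r ^ i ≤ 2 := by
  have h1 : ∑ i ∈ Finset.range n, r ^ i ≤ ∑ i ∈ Finset.range n, (1/2:ℝ) ^ i :=
    Finset.sum_le_sum fun i _ => pow_le_pow_left₀ hr0 hr i
  have h2 : ∀ n : ℕ, ∑ i ∈ Finset.range n, (1/2:ℝ) ^ i = 2 - 2 * (1/2)^n := by
    intro n
    induction n with
    | zero => simp
    | succ n ih => rw [Finset.sum_range_succ, ih, pow_succ]; ring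
  have h3 : (0:ℝ) ≤ 2 * (1/2)^n := by positivity
  rw [h2 n] at h1
  linarith

lemma sum_bound (s : ℕ) (x q : ℝ) (hx : 1 ≤ x) (hq : 0 < q) (hr : 2*(s:ℝ)*q ≤ x) :
    ∑ j ∈ Finset.range (s+1), (s.choose j : ℝ) * west q j * x^(s-j)
      ≤ x^s + 2*(s:ℝ)*x^(s-1) := by
  have hx0 : (0:ℝ) < x := by linarith
  rw [Finset.sum_range_succ']
  have h0 : (s.choose 0 : ℝ) * west q 0 * x^(s-0) = x^s := by
    simp [west_zero]
  rw [h0]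
  have hterm : ∀ i ∈ Finset.range s,
      (s.choose (i+1) : ℝ) * west q (i+1) * x^(s-(i+1))
      ≤ ((s:ℝ) * x^(s-1)) * ((s:ℝ)*q/x)^i := by
    intro i hi
    have his : i < s := Finset.mem_range.mp hi
    have hdesc : (s.choose (i+1) : ℝ) * (Nat.factorial (i+1) : ℝ) ≤ (s:ℝ)^(i+1) := by
      rw [← Nat.cast_mul]
      have h1 : s.choose (i+1) * Nat.factorial (i+1) = s.descFactorial (i+1) := by
        rw [Nat.descFactorial_eq_factorial_mul_choose]; ring
      rw [h1]
      exact_mod_cast Nat.descFactorial_le_pow s (i+1)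
    have hwest : west q (i+1) = (Nat.factorial (i+1) : ℝ) * q^i := by
      rw [west]; congr 1
    have hrhs : ((s:ℝ) * x^(s-1)) * ((s:ℝ)*q/x)^i = (s:ℝ)^(i+1) * q^i * x^(s-1-i) := by
      rw [div_pow, mul_pow]
      have hxsplit : x^(s-1) = x^(s-1-i) * x^i := by
        rw [← pow_add]; congr 1; omega
      rw [hxsplit]
      rw [pow_succ]
      field_simp
    rw [hwest, hrhs]
    have hpow : (0:ℝ) < x^(s-1-i) := by positivity
    have hq' : (0:ℝ) ≤ q^i := by positivity
    calc (s.choose (i+1) : ℝ) * ((Nat.factorial (i+1) : ℝ) * q^i) * x^(s-(i+1))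
        = ((s.choose (i+1) : ℝ) * (Nat.factorial (i+1) : ℝ)) * (q^i * x^(s-1-i)) := by
          have : s - (i+1) = s - 1 - i := by omega
          rw [this]; ring
      _ ≤ (s:ℝ)^(i+1) * (q^i * x^(s-1-i)) := by
          refine mul_le_mul_of_nonneg_right hdesc (by positivity)
      _ = (s:ℝ)^(i+1) * q^i * x^(s-1-i) := by ring
  have hgeom : ∑ i ∈ Finset.range s, ((s:ℝ) * x^(s-1)) * ((s:ℝ)*q/x)^i
      ≤ ((s:ℝ) * x^(s-1)) * 2 := by
    rw [← Finset.mul_sum]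
    refine mul_le_mul_of_nonneg_left ?_ (by positivity)
    refine geom_le_two s _ (by positivity) ?_
    rw [div_le_iff₀ hx0]
    nlinarith
  have := Finset.sum_le_sum hterm
  nlinarith [this, hgeom]

lemma gset_eq_iff (L : Vtx m k → Finset ℕ) (gh : ℕ → Fin k) (v : Vtx m k) (A : Finset ℕ)
    (hA : A ⊆ L v) : gset L gh v = A ↔
      ((∀ c ∈ A, gh c = v.1) ∧ (∀ c ∈ L v \ A, gh c ≠ v.1)) := by
  constructor
  · intro h
    constructor
    · intro c hc
      have : c ∈ gset L gh v := h ▸ hc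
      exact (Finset.mem_filter.mp this).2
    · intro c hc heq
      have h1 := Finset.mem_sdiff.mp hc
      have : c ∈ gset L gh v := Finset.mem_filter.mpr ⟨h1.1, heq⟩
      exact h1.2 (h ▸ this)
  · rintro ⟨h1, h2⟩
    ext c
    simp only [gset, Finset.mem_filter]
    constructor
    · rintro ⟨hcL, heq⟩
      by_contra hcA
      exact h2 c (Finset.mem_sdiff.mpr ⟨hcL, hcA⟩) heq
    · intro hcA
      exact ⟨hA hcA, h1 c hcA⟩

lemma sum_W0_le (L : Vtx m k → Finset ℕ) (hk : 0 < k) (hk2 : 2 ≤ k) (s : ℕ)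
    (hL : ∀ v, (L v).card = s) (q : ℝ) (hq : 0 < q) (hr : 2*(s:ℝ)*q ≤ (k:ℝ)-1) :
    ∑ g : ↑(colors L) → Fin k, Wpot L (ghat L hk g) q ∅
      ≤ (Fintype.card (Vtx m k) : ℝ) *
        ((((k:ℝ)-1)^s + 2*(s:ℝ)*((k:ℝ)-1)^(s-1)) * (k:ℝ)^((colors L).card - s)) := by
  have hx1 : (1:ℝ) ≤ (k:ℝ) - 1 := by
    have : (2:ℝ) ≤ (k:ℝ) := by exact_mod_cast hk2
    linarith
  have hWrw : ∀ g : ↑(colors L) → Fin k, Wpot L (ghat L hk g) q ∅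
      = ∑ v : Vtx m k, west q ((gset L (ghat L hk g) v).card) := by
    intro g; rw [Wpot]; simp
  rw [Finset.sum_congr rfl fun g _ => hWrw g, Finset.sum_comm]
  have key : ∀ v : Vtx m k,
      ∑ g : ↑(colors L) → Fin k, west q ((gset L (ghat L hk g) v).card)
      ≤ (((k:ℝ)-1)^s + 2*(s:ℝ)*((k:ℝ)-1)^(s-1)) * (k:ℝ)^((colors L).card - s) := by
    intro v
    have hsplit : ∀ g : ↑(colors L) → Fin k,
        west q ((gset L (ghat L hk g) v).card)
        = ∑ A ∈ (L v).powerset, (if gset L (ghat L hk g) v = A then west q A.card else 0) := by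
      intro g
      rw [Finset.sum_ite_eq (L v).powerset (gset L (ghat L hk g) v)
        (fun A => west q A.card)]
      rw [if_pos (Finset.mem_powerset.mpr
        (show gset L (ghat L hk g) v ⊆ L v from Finset.filter_subset _ _))]
    rw [Finset.sum_congr rfl fun g _ => hsplit g, Finset.sum_comm]
    have hA : ∀ A ∈ (L v).powerset,
        ∑ g : ↑(colors L) → Fin k, (if gset L (ghat L hk g) v = A then west q A.card else 0)
        = west q A.card * (((k:ℝ)-1)^(s - A.card) * (k:ℝ)^((colors L).card - s)) := by
      intro A hA
      have hAsub : A ⊆ L v := Finset.mem_powerset.mp hA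
      have hAcards : A.card ≤ s := by rw [← hL v]; exact Finset.card_le_card hAsub
      have hscards : s ≤ (colors L).card := by
        rw [← hL v]; exact Finset.card_le_card (list_subset_colors L v)
      have rw1 : ∀ g : ↑(colors L) → Fin k,
          (if gset L (ghat L hk g) v = A then west q A.card else 0)
          = west q A.card * (if (∀ c ∈ A, ghat L hk g c = v.1) ∧
              (∀ c ∈ L v \ A, ghat L hk g c ≠ v.1) then (1:ℝ) else 0) := by
        intro g
        rw [← if_congr (gset_eq_iff L (ghat L hk g) v A hAsub) rfl rfl]
        split_ifs <;> simp
      rw [Finset.sum_congr rfl fun g _ => rw1 g, ← Finset.mul_sum]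
      rw [count_pattern L hk v.1 A (L v \ A) (le_trans hAsub (list_subset_colors L v))
        (le_trans (Finset.sdiff_subset) (list_subset_colors L v)) Finset.disjoint_sdiff]
      have hc1 : (L v \ A).card = s - A.card := by
        rw [Finset.card_sdiff_of_subset hAsub, hL v]
      have hc2 : (colors L).card - A.card - (L v \ A).card = (colors L).card - s := by
        rw [hc1]; omega
      rw [hc2, hc1]
    rw [Finset.sum_congr rfl hA]
    have step : ∑ A ∈ (L v).powerset,
        west q A.card * (((k:ℝ)-1)^(s - A.card) * (k:ℝ)^((colors L).card - s))
        = (∑ A ∈ (L v).powerset, west q A.card * ((k:ℝ)-1)^(s - A.card))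
            * (k:ℝ)^((colors L).card - s) := by
      rw [Finset.sum_mul]
      exact Finset.sum_congr rfl fun A _ => by ring
    rw [step]
    have hkpow : (0:ℝ) ≤ (k:ℝ)^((colors L).card - s) := by positivity
    refine mul_le_mul_of_nonneg_right ?_ hkpow
    have happ : ∑ A ∈ (L v).powerset, west q A.card * ((k:ℝ)-1)^(s - A.card)
        = ∑ j ∈ Finset.range (s+1), ((L v).card.choose j) •
            (west q j * ((k:ℝ)-1)^(s - j)) := by
      rw [Finset.sum_powerset_apply_card (fun j => west q j * ((k:ℝ)-1)^(s-j))]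
      rw [hL v]
    rw [happ]
    have hsmul : ∀ j ∈ Finset.range (s+1), ((L v).card.choose j) •
        (west q j * ((k:ℝ)-1)^(s - j)) = (s.choose j : ℝ) * west q j * ((k:ℝ)-1)^(s-j) := by
      intro j _
      rw [hL v, nsmul_eq_mul]; ring
    rw [Finset.sum_congr rfl hsmul]
    exact sum_bound s ((k:ℝ)-1) q hx1 hq hr
  calc ∑ v : Vtx m k, ∑ g : ↑(colors L) → Fin k, west q ((gset L (ghat L hk g) v).card)
      ≤ ∑ v : Vtx m k, (((k:ℝ)-1)^s + 2*(s:ℝ)*((k:ℝ)-1)^(s-1)) * (k:ℝ)^((colors L).card - s) :=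
        Finset.sum_le_sum fun v _ => key v
    _ = (Fintype.card (Vtx m k) : ℝ) *
        ((((k:ℝ)-1)^s + 2*(s:ℝ)*((k:ℝ)-1)^(s-1)) * (k:ℝ)^((colors L).card - s)) := by
        rw [Finset.sum_const, Finset.card_univ, nsmul_eq_mul]

lemma card_vtx (hm : 0 < m) (hk : 0 < k) : (Fintype.card (Vtx m k)) = k * m := by
  simp [Vtx]

lemma exists_good_g (L : Vtx m k → Finset ℕ) (hm : 0 < m) (hk : 0 < k) (hk2 : 2 ≤ k)
    (s : ℕ) (hs0 : 0 < s) (hL : ∀ v, (L v).card = s) (q : ℝ)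
    (hqdef : q = (k:ℝ)/(10000000*(s:ℝ)))
    (hs19 : 19*(k:ℝ) ≤ (s:ℝ))
    (hcore : (m:ℝ) * ((k:ℝ)-1)^s * 10100000 < (k:ℝ)^s) :
    ∃ g : ↑(colors L) → Fin k,
      (((univ.filter fun v : Vtx m k => gset L (ghat L hk g) v = ∅).card : ℝ)
          < (k:ℝ)/10000000) ∧
      Wpot L (ghat L hk g) q ∅ < (s:ℝ)/32 := by
  have hkR : (0:ℝ) < k := by exact_mod_cast hk
  have hk2R : (2:ℝ) ≤ k := by exact_mod_cast hk2
  have hsR : (0:ℝ) < s := by exact_mod_cast hs0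
  have hq : 0 < q := by rw [hqdef]; positivity
  have hx1 : (1:ℝ) ≤ (k:ℝ) - 1 := by linarith
  have hr : 2*(s:ℝ)*q ≤ (k:ℝ)-1 := by
    rw [hqdef]
    rw [div_eq_mul_inv, mul_inv]
    have h1 : 2*(s:ℝ)*((k:ℝ) * ((10000000:ℝ)⁻¹ * ((s:ℝ))⁻¹)) = (k:ℝ)/5000000 := by
      field_simp
      ring
    rw [h1]
    rw [div_le_iff₀ (by norm_num : (0:ℝ) < 5000000)]
    nlinarith
  have hcV : (Fintype.card (Vtx m k) : ℝ) = (k:ℝ) * m := by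
    rw [card_vtx hm hk]; push_cast; ring
  -- total of the two error terms
  have hscol : s ≤ (colors L).card := by
    have v0 : Vtx m k := ⟨⟨0, hk⟩, ⟨0, hm⟩⟩
    exact le_trans (le_of_eq (hL v0).symm) (Finset.card_le_card (list_subset_colors L v0))
  set N := (colors L).card with hN
  have hEB := sum_badcard L hk s hL
  have hEW := sum_W0_le L hk hk2 s hL q hq hr
  -- sum of Φ over g is < number of g's
  set x : ℝ := (k:ℝ) - 1 with hxdef
  have hx0 : (0:ℝ) < x := by rw [hxdef]; linarith
  have hxk : (k:ℝ) ≤ 2*x := by rw [hxdef]; linarith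
  have hkey : (10000000/(k:ℝ)) * ((Fintype.card (Vtx m k) : ℝ) * (x^s * (k:ℝ)^(N - s)))
      + (32/(s:ℝ)) * ((Fintype.card (Vtx m k) : ℝ) * ((x^s + 2*(s:ℝ)*x^(s-1)) * (k:ℝ)^(N - s)))
      < (k:ℝ)^N := by
    have hsplit : (k:ℝ)^N = (k:ℝ)^s * (k:ℝ)^(N-s) := by
      rw [← pow_add]
      congr 1
      omega
    rw [hsplit, hcV]
    have hkpow : (0:ℝ) < (k:ℝ)^(N-s) := by positivity
    rw [show (10000000/(k:ℝ)) * (((k:ℝ)*m) * (x^s * (k:ℝ)^(N - s)))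
        = (10000000 * ((m:ℝ) * x^s)) * (k:ℝ)^(N-s) * ((k:ℝ)/(k:ℝ)) by ring]
    rw [div_self (ne_of_gt hkR), mul_one]
    have h2 : (32/(s:ℝ)) * (((k:ℝ)*m) * ((x^s + 2*(s:ℝ)*x^(s-1)) * (k:ℝ)^(N - s)))
        ≤ (2 * ((m:ℝ) * x^s) + 128 * ((m:ℝ) * x^s)) * (k:ℝ)^(N-s) := by
      have hks : 32 * (k:ℝ) / s ≤ 2 := by
        rw [div_le_iff₀ hsR]
        nlinarith
      have hxs1 : (k:ℝ) * x^(s-1) ≤ 2 * x^s := by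
        have : x^s = x^(s-1) * x := by
          rw [← pow_succ]
          congr 1
          omega
        rw [this]
        nlinarith [pow_pos hx0 (s-1)]
      have hterm1 : (32/(s:ℝ)) * (((k:ℝ)*m) * (x^s * (k:ℝ)^(N - s)))
          ≤ 2 * ((m:ℝ) * x^s) * (k:ℝ)^(N-s) := by
        have hmpos : (0:ℝ) ≤ (m:ℝ) := by positivity
        have hxspos : (0:ℝ) < x^s := pow_pos hx0 s
        have : (32/(s:ℝ)) * (((k:ℝ)*m) * (x^s * (k:ℝ)^(N - s)))
            = (32*(k:ℝ)/s) * ((m:ℝ) * x^s * (k:ℝ)^(N-s)) := by ring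
        rw [this]
        have h9 : (0:ℝ) ≤ (m:ℝ) * x^s * (k:ℝ)^(N-s) := by positivity
        calc (32*(k:ℝ)/s) * ((m:ℝ) * x^s * (k:ℝ)^(N-s))
            ≤ 2 * ((m:ℝ) * x^s * (k:ℝ)^(N-s)) := mul_le_mul_of_nonneg_right hks h9
          _ = 2 * ((m:ℝ) * x^s) * (k:ℝ)^(N-s) := by ring
      have hterm2 : (32/(s:ℝ)) * (((k:ℝ)*m) * ((2*(s:ℝ)*x^(s-1)) * (k:ℝ)^(N - s)))
          ≤ 128 * ((m:ℝ) * x^s) * (k:ℝ)^(N-s) := by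
        have : (32/(s:ℝ)) * (((k:ℝ)*m) * ((2*(s:ℝ)*x^(s-1)) * (k:ℝ)^(N - s)))
            = 64 * ((m:ℝ) * ((k:ℝ) * x^(s-1)) * (k:ℝ)^(N-s)) * ((s:ℝ)/(s:ℝ)) := by ring
        rw [this, div_self (ne_of_gt hsR), mul_one]
        have h64 : (0:ℝ) ≤ 64 * ((m:ℝ) * (k:ℝ)^(N-s)) := by positivity
        calc 64 * ((m:ℝ) * ((k:ℝ) * x^(s-1)) * (k:ℝ)^(N-s))
            = (64 * ((m:ℝ) * (k:ℝ)^(N-s))) * ((k:ℝ) * x^(s-1)) := by ring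
          _ ≤ (64 * ((m:ℝ) * (k:ℝ)^(N-s))) * (2 * x^s) :=
              mul_le_mul_of_nonneg_left hxs1 h64
          _ = 128 * ((m:ℝ) * x^s) * (k:ℝ)^(N-s) := by ring
      calc (32/(s:ℝ)) * (((k:ℝ)*m) * ((x^s + 2*(s:ℝ)*x^(s-1)) * (k:ℝ)^(N - s)))
          = (32/(s:ℝ)) * (((k:ℝ)*m) * (x^s * (k:ℝ)^(N - s)))
            + (32/(s:ℝ)) * (((k:ℝ)*m) * ((2*(s:ℝ)*x^(s-1)) * (k:ℝ)^(N - s))) := by ring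
        _ ≤ 2 * ((m:ℝ) * x^s) * (k:ℝ)^(N-s) + 128 * ((m:ℝ) * x^s) * (k:ℝ)^(N-s) :=
            add_le_add hterm1 hterm2
        _ = (2 * ((m:ℝ) * x^s) + 128 * ((m:ℝ) * x^s)) * (k:ℝ)^(N-s) := by ring
    have hfin : (10000000 * ((m:ℝ) * x^s)) * (k:ℝ)^(N-s)
        + (2 * ((m:ℝ) * x^s) + 128 * ((m:ℝ) * x^s)) * (k:ℝ)^(N-s)
        < (k:ℝ)^s * (k:ℝ)^(N-s) := by
      have hmx : (0:ℝ) < (m:ℝ) * x^s := by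
        have : (0:ℝ) < (m:ℝ) := by exact_mod_cast hm
        have := pow_pos hx0 s
        positivity
      have hsum : 10000000 * ((m:ℝ) * x^s) + (2 * ((m:ℝ) * x^s) + 128 * ((m:ℝ) * x^s))
          < (k:ℝ)^s := by nlinarith [hcore]
      calc (10000000 * ((m:ℝ) * x^s)) * (k:ℝ)^(N-s)
          + (2 * ((m:ℝ) * x^s) + 128 * ((m:ℝ) * x^s)) * (k:ℝ)^(N-s)
          = (10000000 * ((m:ℝ) * x^s) + (2 * ((m:ℝ) * x^s) + 128 * ((m:ℝ) * x^s)))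
            * (k:ℝ)^(N-s) := by ring
        _ < (k:ℝ)^s * (k:ℝ)^(N-s) := mul_lt_mul_of_pos_right hsum hkpow
    linarith [h2, hfin]
  -- conclude with an averaging argument
  have htotal : ∑ g : ↑(colors L) → Fin k,
      ((10000000/(k:ℝ)) * ((univ.filter fun v : Vtx m k =>
          gset L (ghat L hk g) v = ∅).card : ℝ)
        + (32/(s:ℝ)) * Wpot L (ghat L hk g) q ∅)
      < ∑ _g : ↑(colors L) → Fin k, (1:ℝ) := by
    rw [Finset.sum_add_distrib, ← Finset.mul_sum, ← Finset.mul_sum]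
    rw [hEB]
    have hcardfun : ∑ _g : ↑(colors L) → Fin k, (1:ℝ) = (k:ℝ)^N := by
      rw [Finset.sum_const, Finset.card_univ, nsmul_eq_mul, mul_one]
      rw [Fintype.card_fun]
      push_cast
      congr 1 <;> simp [hN]
    rw [hcardfun]
    have hW32 : (32/(s:ℝ)) * (∑ g : ↑(colors L) → Fin k, Wpot L (ghat L hk g) q ∅)
        ≤ (32/(s:ℝ)) * ((Fintype.card (Vtx m k) : ℝ) *
          ((x^s + 2*(s:ℝ)*x^(s-1)) * (k:ℝ)^(N - s))) := by
      refine mul_le_mul_of_nonneg_left hEW (by positivity)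
    calc (10000000/(k:ℝ)) * ((Fintype.card (Vtx m k) : ℝ) * (x^s * (k:ℝ)^(N - s)))
          + (32/(s:ℝ)) * (∑ g : ↑(colors L) → Fin k, Wpot L (ghat L hk g) q ∅)
        ≤ (10000000/(k:ℝ)) * ((Fintype.card (Vtx m k) : ℝ) * (x^s * (k:ℝ)^(N - s)))
          + (32/(s:ℝ)) * ((Fintype.card (Vtx m k) : ℝ) *
            ((x^s + 2*(s:ℝ)*x^(s-1)) * (k:ℝ)^(N - s))) := by linarith
      _ < (k:ℝ)^N := hkey
  obtain ⟨g, _, hg⟩ := Finset.exists_lt_of_sum_lt htotal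
  refine ⟨g, ?_, ?_⟩
  · have hW0 : 0 ≤ (32/(s:ℝ)) * Wpot L (ghat L hk g) q ∅ := by
      have := Wpot_nonneg L (ghat L hk g) hq.le (∅ : Finset ℕ)
      positivity
    have h1 : (10000000/(k:ℝ)) * ((univ.filter fun v : Vtx m k =>
        gset L (ghat L hk g) v = ∅).card : ℝ) < 1 := by linarith
    rw [div_mul_eq_mul_div, div_lt_one hkR] at h1
    rw [lt_div_iff₀ (by norm_num : (0:ℝ) < 10000000)]
    linarith
  · have hB0 : 0 ≤ (10000000/(k:ℝ)) * ((univ.filter fun v : Vtx m k =>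
        gset L (ghat L hk g) v = ∅).card : ℝ) :=
      mul_nonneg (div_nonneg (by norm_num) hkR.le) (Nat.cast_nonneg _)
    have h1 : (32/(s:ℝ)) * Wpot L (ghat L hk g) q ∅ < 1 := by linarith
    rw [div_mul_eq_mul_div, div_lt_one hsR] at h1
    rw [lt_div_iff₀ (by norm_num : (0:ℝ) < 32)]
    linarith



theorem kmk_choosable {m k : ℕ} (hm : 0 < m) (hk2 : 2 ≤ k) (s : ℕ)
    (hs19 : 19*(k:ℝ) ≤ (s:ℝ))
    (hcore : (m:ℝ) * ((k:ℝ)-1)^s * 10100000 < (k:ℝ)^s) :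
    Choosable (Kmk m k) s := by
  classical
  intro L hL
  have hk : 0 < k := by omega
  have hkR : (0:ℝ) < k := by exact_mod_cast hk
  have hk2R : (2:ℝ) ≤ (k:ℝ) := by exact_mod_cast hk2
  have hsR : (0:ℝ) < (s:ℝ) := by
    have : (38:ℝ) ≤ (s:ℝ) := by linarith
    linarith
  have hs0 : 0 < s := by exact_mod_cast hsR
  set q : ℝ := (k:ℝ)/(10000000*(s:ℝ)) with hqdef
  have hq : 0 < q := by rw [hqdef]; positivity
  obtain ⟨g, hT, hW0⟩ := exists_good_g L hm hk hk2 s hs0 hL q hqdef hs19 hcore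
  set gh := ghat L hk g with hgh
  set badF := (univ.filter fun v : Vtx m k => gset L gh v = ∅) with hbadF
  set Tst : ℝ := (k:ℝ)/10000000 with hTst
  set Wmax : ℝ := (s:ℝ)*(27/100) with hWmax
  have hTstle : Tst ≤ (s:ℝ)/100000000 := by
    rw [hTst]
    rw [div_le_div_iff₀ (by norm_num) (by norm_num)]
    nlinarith
  have hqs : q * (s:ℝ) = (k:ℝ)/10000000 := by
    rw [hqdef]
    field_simp
  -- exp-bound on the compounding factor
  have hexp2 : Real.exp 2 ≤ 371/50 := by
    have h1 := Real.exp_one_lt_d9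
    have h2 : Real.exp 2 = Real.exp 1 * Real.exp 1 := by
      rw [← Real.exp_add]; norm_num
    have h3 : (0:ℝ) < Real.exp 1 := Real.exp_pos 1
    nlinarith
  have hpowK : (1 + 2/(q * (s:ℝ))) ^ badF.card ≤ Real.exp 2 := by
    have hbadle : (badF.card : ℝ) ≤ Tst := le_of_lt (by rw [hTst]; exact hT)
    have ha : (0:ℝ) ≤ 2/(q*(s:ℝ)) := by positivity
    have h1 : (1 + 2/(q * (s:ℝ))) ^ badF.card ≤ Real.exp (2/(q*(s:ℝ))) ^ badF.card := by
      refine pow_le_pow_left₀ (by linarith) ?_ _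
      have := Real.add_one_le_exp (2/(q*(s:ℝ)))
      linarith
    have h2 : Real.exp (2/(q*(s:ℝ))) ^ badF.card
        = Real.exp ((badF.card : ℝ) * (2/(q*(s:ℝ)))) := by
      rw [← Real.exp_nat_mul]
    have h3 : (badF.card : ℝ) * (2/(q*(s:ℝ))) ≤ 2 := by
      rw [hqs]
      have h4 : 2/((k:ℝ)/10000000) = 20000000/(k:ℝ) := by
        rw [div_div_eq_mul_div]
        ring
      rw [h4]
      have hbadle' : (badF.card : ℝ) ≤ (k:ℝ)/10000000 := by
        rw [hTst] at hbadle
        exact hbadle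
      calc (badF.card : ℝ) * (20000000/(k:ℝ))
          ≤ ((k:ℝ)/10000000) * (20000000/(k:ℝ)) := by
            refine mul_le_mul_of_nonneg_right hbadle' (by positivity)
        _ = 2 := by field_simp; ring
    calc (1 + 2/(q * (s:ℝ))) ^ badF.card
        ≤ Real.exp (2/(q*(s:ℝ))) ^ badF.card := h1
      _ = Real.exp ((badF.card : ℝ) * (2/(q*(s:ℝ)))) := h2
      _ ≤ Real.exp 2 := Real.exp_le_exp.mpr h3
  have hWin : Wpot L gh q ∅ * (1 + 2/(q * (s:ℝ))) ^ badF.card ≤ Wmax := by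
    have hWnn : 0 ≤ Wpot L gh q ∅ := Wpot_nonneg L gh hq.le ∅
    have hKnn : (0:ℝ) ≤ (1 + 2/(q * (s:ℝ))) ^ badF.card := by positivity
    calc Wpot L gh q ∅ * (1 + 2/(q * (s:ℝ))) ^ badF.card
        ≤ ((s:ℝ)/32) * Real.exp 2 := by
          refine mul_le_mul (le_of_lt hW0) hpowK hKnn ?_
          positivity
      _ ≤ ((s:ℝ)/32) * (371/50) := by
          refine mul_le_mul_of_nonneg_left hexp2 (by positivity)
      _ ≤ Wmax := by rw [hWmax]; nlinarith
  have hTWcond : Tst + Wmax + (s:ℝ)/2 ≤ (s:ℝ) := by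
    rw [hWmax]
    nlinarith
  obtain ⟨σ, hσ1, hσ2, hσ3⟩ := process L gh s hL q hq Tst Wmax
    (by rw [hWmax]; positivity) hTWcond hs0 badF.card badF ∅ rfl
    (fun v hv => (Finset.mem_filter.mp hv).2)
    (by
      rw [Finset.card_empty]
      push_cast
      rw [hTst]
      exact le_of_lt (by simpa using hT))
    (fun u hu => by simpa using hu)
    hWin
  have hgood : ∀ v : Vtx m k, v ∉ badF →
      (gset L gh v \ (∅ ∪ badF.image σ)).Nonempty := by
    intro v hv
    refine hσ3 v ?_
    rw [Finset.nonempty_iff_ne_empty]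
    intro h
    exact hv (Finset.mem_filter.mpr ⟨Finset.mem_univ v, h⟩)
  refine ⟨fun v => if h : v ∈ badF then σ v else (hgood v h).choose, ?_, ?_⟩
  · intro v
    by_cases h : v ∈ badF
    · simp only [dif_pos h]
      exact (hσ1 v h).1
    · simp only [dif_neg h]
      have hspec := (hgood v h).choose_spec
      have := (Finset.mem_sdiff.mp hspec).1
      exact (Finset.mem_filter.mp this).1
  · intro u v hadj heq
    have huv1 : u.1 ≠ v.1 := hadj
    have huv : u ≠ v := fun h => huv1 (congrArg Sigma.fst h)
    by_cases hu : u ∈ badF <;> by_cases hv : v ∈ badF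
    · simp only [dif_pos hu, dif_pos hv] at heq
      exact huv (hσ2 (Finset.mem_coe.mpr hu) (Finset.mem_coe.mpr hv) heq)
    · simp only [dif_pos hu, dif_neg hv] at heq
      have hspec := (hgood v hv).choose_spec
      have h2 := (Finset.mem_sdiff.mp hspec).2
      refine h2 (Finset.mem_union_right _ ?_)
      rw [← heq]
      exact Finset.mem_image_of_mem σ hu
    · simp only [dif_neg hu, dif_pos hv] at heq
      have hspec := (hgood u hu).choose_spec
      have h2 := (Finset.mem_sdiff.mp hspec).2
      refine h2 (Finset.mem_union_right _ ?_)
      rw [heq]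
      exact Finset.mem_image_of_mem σ hv
    · simp only [dif_neg hu, dif_neg hv] at heq
      have hspecu := (Finset.mem_sdiff.mp (hgood u hu).choose_spec).1
      have hspecv := (Finset.mem_sdiff.mp (hgood v hv).choose_spec).1
      have h1 := (Finset.mem_filter.mp hspecu).2
      have h2 := (Finset.mem_filter.mp hspecv).2
      rw [heq] at h1
      exact huv1 (h1.symm.trans h2)


lemma exp_twenty_big : (412000000:ℝ) ≤ Real.exp 20 := by
  have h1 : (2.7:ℝ) ≤ Real.exp 1 := by
    have := Real.exp_one_gt_d9
    linarith
  have h2 : ((2.7:ℝ))^(20:ℕ) ≤ (Real.exp 1)^(20:ℕ) :=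
    pow_le_pow_left₀ (by norm_num) h1 20
  have h3 : (Real.exp 1)^(20:ℕ) = Real.exp 20 := by
    rw [← Real.exp_nat_mul]
    norm_num
  have h4 : (412000000:ℝ) ≤ (2.7:ℝ)^(20:ℕ) := by norm_num
  linarith

lemma exp_half_small : Real.exp (1/2) ≤ 1.65 := by
  have h1 : Real.exp (1/2) * Real.exp (1/2) = Real.exp 1 := by
    rw [← Real.exp_add]; norm_num
  have h2 := Real.exp_one_lt_d9
  have h3 : (0:ℝ) < Real.exp (1/2) := Real.exp_pos _
  nlinarith

lemma log_log_lower {m : ℕ} (hm : 2 ≤ m) :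
    1 - 1/(Real.log m) ≤ Real.log (Real.log m) ∧ Real.log 2 ≤ Real.log m ∧
      0 < Real.log m := by
  have hm1 : (2:ℝ) ≤ (m:ℝ) := by exact_mod_cast hm
  have hlogm : Real.log 2 ≤ Real.log m := by
    apply Real.log_le_log (by norm_num)
    linarith
  have hlogm_pos : 0 < Real.log m := Real.log_pos (by linarith)
  refine ⟨?_, hlogm, hlogm_pos⟩
  have h := Real.log_le_sub_one_of_pos (show (0:ℝ) < (Real.log m)⁻¹ by positivity)
  rw [Real.log_inv] at h
  have : (Real.log m)⁻¹ = 1/(Real.log m) := by rw [inv_eq_one_div]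
  linarith

lemma numerics (m k : ℕ) (hm : 2 ≤ m) (hk : 2 ≤ k) :
    19*(k:ℝ) ≤ ((⌊(k:ℝ)*(Real.log m + Real.log (Real.log m) + 20)⌋₊ : ℕ) : ℝ) ∧
    (m:ℝ)*((k:ℝ)-1)^(⌊(k:ℝ)*(Real.log m + Real.log (Real.log m) + 20)⌋₊ : ℕ) * 10100000
      < (k:ℝ)^(⌊(k:ℝ)*(Real.log m + Real.log (Real.log m) + 20)⌋₊ : ℕ) ∧
    (((⌊(k:ℝ)*(Real.log m + Real.log (Real.log m) + 20)⌋₊ : ℕ)) : ℝ)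
      ≤ (k:ℝ)*(Real.log m + Real.log (Real.log m) + 20) := by
  obtain ⟨hll, hlogm, hlogm_pos⟩ := log_log_lower hm
  have hlog2 := Real.log_two_gt_d9
  have hm1 : (2:ℝ) ≤ (m:ℝ) := by exact_mod_cast hm
  have hm0 : (0:ℝ) < (m:ℝ) := by linarith
  have hkR : (2:ℝ) ≤ (k:ℝ) := by exact_mod_cast hk
  have hkpos : (0:ℝ) < k := by linarith
  set B : ℝ := Real.log m + Real.log (Real.log m) + 20 with hB
  have hinv : 1/(Real.log m) ≤ 1/0.6931471803 := by
    apply one_div_le_one_div_of_le (by norm_num)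
    linarith
  have hBlb : 20.25 ≤ B := by
    rw [hB]
    have h1 : 1 - 1/0.6931471803 ≤ Real.log (Real.log m) := by linarith
    have h2 : (-0.4429:ℝ) ≤ (1:ℝ) - 1/0.6931471803 := by norm_num
    linarith
  have hkB0 : (0:ℝ) ≤ (k:ℝ)*B := by nlinarith
  set s : ℕ := ⌊(k:ℝ)*B⌋₊ with hs
  have hfloor1 : ((s:ℕ):ℝ) ≤ (k:ℝ)*B := Nat.floor_le hkB0
  have hfloor2 : (k:ℝ)*B < ((s:ℕ):ℝ) + 1 := Nat.lt_floor_add_one _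
  have hs19 : 19*(k:ℝ) ≤ ((s:ℕ):ℝ) := by nlinarith
  refine ⟨hs19, ?_, hfloor1⟩
  have hsk : B - 1/2 ≤ ((s:ℕ):ℝ)/(k:ℝ) := by
    rw [le_div_iff₀ hkpos]
    nlinarith
  have hexp1 : ((k:ℝ)-1)^(s:ℕ) = (1 - 1/(k:ℝ))^(s:ℕ) * (k:ℝ)^(s:ℕ) := by
    rw [← mul_pow]
    congr 1
    field_simp
  have h1k2 : 1/(k:ℝ) ≤ 1/2 := by
    apply one_div_le_one_div_of_le (by norm_num) hkR
  have hexp2 : (1 - 1/(k:ℝ))^(s:ℕ) ≤ Real.exp (-(((s:ℕ):ℝ)/(k:ℝ))) := by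
    have h0 : (0:ℝ) ≤ 1 - 1/(k:ℝ) := by linarith
    have h1 : 1 - 1/(k:ℝ) ≤ Real.exp (-(1/(k:ℝ))) := by
      have := Real.add_one_le_exp (-(1/(k:ℝ)))
      linarith
    calc (1 - 1/(k:ℝ))^(s:ℕ) ≤ (Real.exp (-(1/(k:ℝ))))^(s:ℕ) := pow_le_pow_left₀ h0 h1 s
      _ = Real.exp (((s:ℕ):ℝ) * (-(1/(k:ℝ)))) := by rw [← Real.exp_nat_mul]
      _ = Real.exp (-(((s:ℕ):ℝ)/(k:ℝ))) := by
          congr 1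
          field_simp
  have hexp3 : Real.exp (-(((s:ℕ):ℝ)/(k:ℝ))) ≤ Real.exp (1/2 - B) :=
    Real.exp_le_exp.mpr (by linarith)
  have hexpB : Real.exp B = (m:ℝ) * Real.log m * Real.exp 20 := by
    rw [hB, Real.exp_add, Real.exp_add, Real.exp_log hm0, Real.exp_log hlogm_pos]
  have hexp4 : (m:ℝ) * Real.exp (1/2 - B) * 10100000 < 1 := by
    have hsub : Real.exp (1/2 - B) = Real.exp (1/2) / ((m:ℝ) * Real.log m * Real.exp 20) := by
      rw [Real.exp_sub, hexpB]
    rw [hsub]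
    have hkey : Real.exp (1/2) * 10100000 < Real.log m * Real.exp 20 := by
      have he20 := exp_twenty_big
      have heh := exp_half_small
      nlinarith [Real.exp_pos 20]
    have hden : (0:ℝ) < (m:ℝ) * Real.log m * Real.exp 20 := by
      have := Real.exp_pos (20:ℝ)
      positivity
    rw [show (m:ℝ) * (Real.exp (1/2) / ((m:ℝ) * Real.log m * Real.exp 20)) * 10100000
      = (Real.exp (1/2) * 10100000) * ((m:ℝ) / ((m:ℝ) * Real.log m * Real.exp 20)) by ring]
    have hmdiv : (m:ℝ) / ((m:ℝ) * Real.log m * Real.exp 20)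
        = 1 / (Real.log m * Real.exp 20) := by
      field_simp
    rw [hmdiv]
    rw [mul_one_div, div_lt_one (mul_pos hlogm_pos (Real.exp_pos 20))]
    linarith
  -- now put together
  have hchain : (m:ℝ) * (1 - 1/(k:ℝ))^(s:ℕ) * 10100000 < 1 := by
    have step1 : (m:ℝ) * (1 - 1/(k:ℝ))^(s:ℕ) * 10100000
        ≤ (m:ℝ) * Real.exp (1/2 - B) * 10100000 := by
      have := le_trans hexp2 hexp3
      nlinarith [this, hm0]
    linarith
  rw [hexp1]
  have hkpows : (0:ℝ) < (k:ℝ)^(s:ℕ) := by positivity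
  calc (m:ℝ) * ((1 - 1/(k:ℝ))^(s:ℕ) * (k:ℝ)^(s:ℕ)) * 10100000
      = ((m:ℝ) * (1 - 1/(k:ℝ))^(s:ℕ) * 10100000) * (k:ℝ)^(s:ℕ) := by ring
    _ < 1 * (k:ℝ)^(s:ℕ) := mul_lt_mul_of_pos_right hchain hkpows
    _ = (k:ℝ)^(s:ℕ) := one_mul _


end KmkUpper

/-- **Upper bound for the choice number of `K_{m*k}`.** For all `m, k ≥ 2`,
`ch(K_{m*k}) ≤ k·(ln m + ln ln m + 20)`. -/
theorem choiceNumber_Kmk_upper (m k : ℕ) (hm : 2 ≤ m) (hk : 2 ≤ k) :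
    (choiceNumber (Kmk m k) : ℝ) ≤ k * (Real.log m + Real.log (Real.log m) + 20) := by
  obtain ⟨h19, hcore, hle⟩ := KmkUpper.numerics m k hm hk
  have hch : Choosable (Kmk m k)
      (⌊(k:ℝ)*(Real.log m + Real.log (Real.log m) + 20)⌋₊ : ℕ) :=
    KmkUpper.kmk_choosable (by omega) hk _ h19 hcore
  have h1 : choiceNumber (Kmk m k)
      ≤ (⌊(k:ℝ)*(Real.log m + Real.log (Real.log m) + 20)⌋₊ : ℕ) :=
    Nat.sInf_le hch
  calc (choiceNumber (Kmk m k) : ℝ)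
      ≤ ((⌊(k:ℝ)*(Real.log m + Real.log (Real.log m) + 20)⌋₊ : ℕ) : ℝ) := by exact_mod_cast h1
    _ ≤ (k:ℝ) * (Real.log m + Real.log (Real.log m) + 20) := hle
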